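/- Suppose m ≥ 5 and the following five divisibility conditions hold in K[x,y]: (A) u₁u_m | u₂u_{m−1}; (B) u₂² | u₁u₃; (B*) u_{m−1}² | u_{m−2}u_m; (C) u₂² | u₁u_{m−2}; (C*) u_{m−1}² | u₃u_m. Then I² is generated by the nine monomials u₁², u₁u₂, u₂², u₁u_{m−1}, u₁u_m, u₂u_m, u_{m−1}², u_{m−1}u_m, u_m²; in particular |G(I²)| ≤ 9. -/

import Mathlib

open MvPolynomial Pointwise

/-- A polynomial is a monomial if it is of the form `monomial s 1`. -/
def IsMonomial {K : Type*} [Field K] {σ : Type*} (p : MvPolynomial σ K) : Prop :=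
  ∃ s : σ →₀ ℕ, p = monomial s 1

/-- The minimal monomial generating set of a monomial ideal: the monomials in `I`
that are not proper multiples of monomials lying in `I`. -/
def minGen {K : Type*} [Field K] {σ : Type*} (I : Ideal (MvPolynomial σ K)) :
    Set (MvPolynomial σ K) :=
  {p | IsMonomial p ∧ p ∈ I ∧
    ∀ q : MvPolynomial σ K, IsMonomial q → q ∈ I → q ∣ p → q = p}

/-- Exponent vector of `x^p y^q` as a finsupp on `Fin 2`. -/
noncomputable def eFS (p q : ℕ) : Fin 2 →₀ ℕ := Finsupp.single 0 p + Finsupp.single 1 q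

lemma eFS_apply0 (p q : ℕ) : eFS p q 0 = p := by
  simp [eFS, Finsupp.single_apply]

lemma eFS_apply1 (p q : ℕ) : eFS p q 1 = q := by
  simp [eFS, Finsupp.single_apply]

lemma monFormula {K : Type*} [Field K] (p q : ℕ) :
    (X 0 ^ p * X 1 ^ q : MvPolynomial (Fin 2) K) = monomial (eFS p q) 1 := by
  rw [X_pow_eq_monomial, X_pow_eq_monomial, monomial_mul, one_mul, eFS]

lemma exp_dvd {K : Type*} [Field K] {p q r s : ℕ} (h1 : p ≤ r) (h2 : q ≤ s) :
    (X 0 ^ p * X 1 ^ q : MvPolynomial (Fin 2) K) ∣ X 0 ^ r * X 1 ^ s :=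
  mul_dvd_mul (pow_dvd_pow _ h1) (pow_dvd_pow _ h2)

lemma dvd_exp {K : Type*} [Field K] {p q r s : ℕ}
    (h : (X 0 ^ p * X 1 ^ q : MvPolynomial (Fin 2) K) ∣ X 0 ^ r * X 1 ^ s) :
    p ≤ r ∧ q ≤ s := by
  rw [monFormula, monFormula, monomial_dvd_monomial] at h
  obtain ⟨h1, -⟩ := h
  rcases h1 with h1 | h1
  · exact absurd h1 one_ne_zero
  · have h0 := Finsupp.le_def.mp h1 0
    have h1' := Finsupp.le_def.mp h1 1
    rw [eFS_apply0, eFS_apply0] at h0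
    rw [eFS_apply1, eFS_apply1] at h1'
    exact ⟨h0, h1'⟩

/-- Improved conditions for tiny squares: under the five divisibility conditions
(A), (B), (B*), (C), (C*), the ideal `I²` is generated by the nine monomials
`u₁², u₁u₂, u₂², u₁u_{m−1}, u₁u_m, u₂u_m, u_{m−1}², u_{m−1}u_m, u_m²`;
in particular `|G(I²)| ≤ 9`. -/
theorem tiny_square_five_conditions (K : Type*) [Field K] (m : ℕ) (hm : 5 ≤ m)
    (a b : ℕ → ℕ)
    (ha : ∀ i, 1 ≤ i → i < m → a (i + 1) < a i)
    (hb : ∀ i, 1 ≤ i → i < m → b i < b (i + 1))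
    (u : ℕ → MvPolynomial (Fin 2) K)
    (hu : ∀ i, u i = X 0 ^ a i * X 1 ^ b i)
    (I : Ideal (MvPolynomial (Fin 2) K))
    (hI : I = Ideal.span (u '' Set.Icc 1 m))
    (hA : u 1 * u m ∣ u 2 * u (m - 1))
    (hB : u 2 ^ 2 ∣ u 1 * u 3)
    (hBs : u (m - 1) ^ 2 ∣ u (m - 2) * u m)
    (hC : u 2 ^ 2 ∣ u 1 * u (m - 2))
    (hCs : u (m - 1) ^ 2 ∣ u 3 * u m) :
    I ^ 2 = Ideal.span
      {u 1 ^ 2, u 1 * u 2, u 2 ^ 2, u 1 * u (m - 1), u 1 * u m, u 2 * u m,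
        u (m - 1) ^ 2, u (m - 1) * u m, u m ^ 2} ∧
    (minGen (I ^ 2)).ncard ≤ 9 := by
  set G : Set (MvPolynomial (Fin 2) K) :=
    {u 1 ^ 2, u 1 * u 2, u 2 ^ 2, u 1 * u (m - 1), u 1 * u m, u 2 * u m,
        u (m - 1) ^ 2, u (m - 1) * u m, u m ^ 2} with hG
  have huu : ∀ i j, u i * u j = X 0 ^ (a i + a j) * X 1 ^ (b i + b j) := by
    intro i j
    rw [hu i, hu j, pow_add, pow_add]
    ring
  -- monotonicity
  have amono : ∀ s t, 1 ≤ s → s ≤ t → t ≤ m → a t ≤ a s := by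
    intro s t hs hst htm
    induction t, hst using Nat.le_induction with
    | base => exact le_refl _
    | succ n hn ih =>
      have h1 := ha n (le_trans hs hn) (by omega)
      have h2 := ih (by omega)
      omega
  have bmono : ∀ s t, 1 ≤ s → s ≤ t → t ≤ m → b s ≤ b t := by
    intro s t hs hst htm
    induction t, hst using Nat.le_induction with
    | base => exact le_refl _
    | succ n hn ih =>
      have h1 := hb n (le_trans hs hn) (by omega)
      have h2 := ih (by omega)
      omega
  -- extract exponent inequalities
  rw [huu 1 m, huu 2 (m-1)] at hA
  rw [pow_two, huu 2 2, huu 1 3] at hB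
  rw [pow_two, huu (m-1) (m-1), huu (m-2) m] at hBs
  rw [pow_two, huu 2 2, huu 1 (m-2)] at hC
  rw [pow_two, huu (m-1) (m-1), huu 3 m] at hCs
  obtain ⟨A1, A2⟩ := dvd_exp hA
  obtain ⟨B1, B2⟩ := dvd_exp hB
  obtain ⟨Bs1, Bs2⟩ := dvd_exp hBs
  obtain ⟨C1, C2⟩ := dvd_exp hC
  obtain ⟨Cs1, Cs2⟩ := dvd_exp hCs
  -- generic step
  have step : ∀ (g : MvPolynomial (Fin 2) K) (p q i j : ℕ), g ∈ G → g = u p * u q →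
      a p + a q ≤ a i + a j → b p + b q ≤ b i + b j → u i * u j ∈ Ideal.span G := by
    intro g p q i j hg hgeq h1 h2
    obtain ⟨c, hc⟩ : g ∣ u i * u j := by
      rw [hgeq, huu, huu]
      exact exp_dvd h1 h2
    rw [hc]
    exact Ideal.mul_mem_right _ _ (Ideal.subset_span hg)
  have mem1 : u 1 ^ 2 ∈ G := by rw [hG]; simp only [Set.mem_insert_iff, Set.mem_singleton_iff]; tauto
  have mem2 : u 1 * u 2 ∈ G := by rw [hG]; simp only [Set.mem_insert_iff, Set.mem_singleton_iff]; tauto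
  have mem3 : u 2 ^ 2 ∈ G := by rw [hG]; simp only [Set.mem_insert_iff, Set.mem_singleton_iff]; tauto
  have mem4 : u 1 * u (m-1) ∈ G := by rw [hG]; simp only [Set.mem_insert_iff, Set.mem_singleton_iff]; tauto
  have mem5 : u 1 * u m ∈ G := by rw [hG]; simp only [Set.mem_insert_iff, Set.mem_singleton_iff]; tauto
  have mem6 : u 2 * u m ∈ G := by rw [hG]; simp only [Set.mem_insert_iff, Set.mem_singleton_iff]; tauto
  have mem7 : u (m-1) ^ 2 ∈ G := by rw [hG]; simp only [Set.mem_insert_iff, Set.mem_singleton_iff]; tauto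
  have mem8 : u (m-1) * u m ∈ G := by rw [hG]; simp only [Set.mem_insert_iff, Set.mem_singleton_iff]; exact Or.inr (Or.inr (Or.inr (Or.inr (Or.inr (Or.inr (Or.inr (Or.inl trivial)))))))
  have mem9 : u m ^ 2 ∈ G := by rw [hG]; simp only [Set.mem_insert_iff, Set.mem_singleton_iff]; exact Or.inr (Or.inr (Or.inr (Or.inr (Or.inr (Or.inr (Or.inr (Or.inr trivial)))))))
  -- the key case analysis
  have key : ∀ i j, 1 ≤ i → i ≤ j → j ≤ m → u i * u j ∈ Ideal.span G := by
    intro i j hi hij hjm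
    have hicases : i = 1 ∨ i = 2 ∨ (3 ≤ i ∧ i ≤ m - 2) ∨ i = m - 1 ∨ i = m := by omega
    rcases hicases with rfl | rfl | ⟨hi3, him2⟩ | rfl | him
    · -- i = 1
      have hjcases : j = 1 ∨ j = 2 ∨ (3 ≤ j ∧ j ≤ m - 2) ∨ j = m - 1 ∨ j = m := by omega
      rcases hjcases with rfl | rfl | ⟨hj3, hjm2⟩ | rfl | hjm'
      · exact step _ 1 1 1 1 mem1 (pow_two _) le_rfl le_rfl
      · exact step _ 1 2 1 2 mem2 rfl le_rfl le_rfl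
      · have h1 := amono j (m-2) (by omega) (by omega) (by omega)
        have h2 := bmono 3 j (by omega) (by omega) (by omega)
        exact step _ 2 2 1 j mem3 (pow_two _) (by omega) (by omega)
      · exact step _ 1 (m-1) 1 (m-1) mem4 rfl le_rfl le_rfl
      · rw [hjm']
        exact step _ 1 m 1 m mem5 rfl le_rfl le_rfl
    · -- i = 2
      have hjcases : j = 2 ∨ (3 ≤ j ∧ j ≤ m - 2) ∨ j = m - 1 ∨ j = m := by omega
      rcases hjcases with rfl | ⟨hj3, hjm2⟩ | rfl | hjm'
      · exact step _ 2 2 2 2 mem3 (pow_two _) le_rfl le_rfl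
      · have h1 := amono j (m-2) (by omega) (by omega) (by omega)
        have h2 := bmono 3 j (by omega) (by omega) (by omega)
        exact step _ 1 (m-1) 2 j mem4 rfl (by omega) (by omega)
      · exact step _ 1 m 2 (m-1) mem5 rfl (by omega) (by omega)
      · rw [hjm']
        exact step _ 2 m 2 m mem6 rfl le_rfl le_rfl
    · -- 3 ≤ i ≤ m - 2
      have hai := amono i (m-2) (by omega) (by omega) (by omega)
      have hbi := bmono 3 i (by omega) (by omega) (by omega)
      have hjcases : j ≤ m - 2 ∨ j = m - 1 ∨ j = m := by omega
      rcases hjcases with hjm2 | rfl | hjm'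
      · have haj := amono j (m-2) (by omega) (by omega) (by omega)
        have hbj := bmono 3 j (by omega) (by omega) (by omega)
        exact step _ 1 m i j mem5 rfl (by omega) (by omega)
      · exact step _ 2 m i (m-1) mem6 rfl (by omega) (by omega)
      · rw [hjm']
        exact step _ (m-1) (m-1) i m mem7 (pow_two _) (by omega) (by omega)
    · -- i = m - 1
      have hjcases : j = m - 1 ∨ j = m := by omega
      rcases hjcases with rfl | hjm'
      · exact step _ (m-1) (m-1) (m-1) (m-1) mem7 (pow_two _) le_rfl le_rfl
      · rw [hjm']
        exact step _ (m-1) m (m-1) m mem8 rfl le_rfl le_rfl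
    · -- i = m
      have hj : j = m := by omega
      rw [him, hj]
      exact step _ m m m m mem9 (pow_two _) le_rfl le_rfl
  -- first part: I^2 = span G
  have hIJ : I ^ 2 = Ideal.span G := by
    rw [hI, pow_two, Ideal.span_mul_span']
    apply le_antisymm
    · rw [Ideal.span_le]
      rintro z hz
      rw [Set.mem_mul] at hz
      obtain ⟨x, hx, y, hy, rfl⟩ := hz
      obtain ⟨i, hi, rfl⟩ := hx
      obtain ⟨j, hj, rfl⟩ := hy
      rw [Set.mem_Icc] at hi hj
      rcases le_total i j with h | h
      · exact key i j hi.1 h hj.2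
      · rw [mul_comm]
        exact key j i hj.1 h hi.2
    · rw [Ideal.span_le]
      have hsp : ∀ p q : ℕ, 1 ≤ p → p ≤ m → 1 ≤ q → q ≤ m →
          u p * u q ∈ Ideal.span (u '' Set.Icc 1 m * (u '' Set.Icc 1 m)) := by
        intro p q h1 h2 h3 h4
        exact Ideal.subset_span
          (Set.mul_mem_mul ⟨p, Set.mem_Icc.mpr ⟨h1, h2⟩, rfl⟩ ⟨q, Set.mem_Icc.mpr ⟨h3, h4⟩, rfl⟩)
      intro z hz
      rw [hG] at hz
      simp only [Set.mem_insert_iff, Set.mem_singleton_iff] at hz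
      rcases hz with rfl | rfl | rfl | rfl | rfl | rfl | rfl | rfl | rfl
      · rw [pow_two]; exact hsp 1 1 (by omega) (by omega) (by omega) (by omega)
      · exact hsp 1 2 (by omega) (by omega) (by omega) (by omega)
      · rw [pow_two]; exact hsp 2 2 (by omega) (by omega) (by omega) (by omega)
      · exact hsp 1 (m-1) (by omega) (by omega) (by omega) (by omega)
      · exact hsp 1 m (by omega) (by omega) (by omega) (by omega)
      · exact hsp 2 m (by omega) (by omega) (by omega) (by omega)
      · rw [pow_two]; exact hsp (m-1) (m-1) (by omega) (by omega) (by omega) (by omega)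
      · exact hsp (m-1) m (by omega) (by omega) (by omega) (by omega)
      · rw [pow_two]; exact hsp m m (by omega) (by omega) (by omega) (by omega)
  refine ⟨hIJ, ?_⟩
  -- second part: minGen count
  have humon : ∀ p q : ℕ, u p * u q = monomial (eFS (a p + a q) (b p + b q)) (1 : K) := by
    intro p q
    rw [huu, monFormula]
  set T : Set (Fin 2 →₀ ℕ) :=
    {eFS (a 1 + a 1) (b 1 + b 1), eFS (a 1 + a 2) (b 1 + b 2), eFS (a 2 + a 2) (b 2 + b 2),
     eFS (a 1 + a (m-1)) (b 1 + b (m-1)), eFS (a 1 + a m) (b 1 + b m),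
     eFS (a 2 + a m) (b 2 + b m), eFS (a (m-1) + a (m-1)) (b (m-1) + b (m-1)),
     eFS (a (m-1) + a m) (b (m-1) + b m), eFS (a m + a m) (b m + b m)} with hT
  have himg : G = (fun s => monomial s (1 : K)) '' T := by
    rw [hT]
    simp only [Set.image_insert_eq, Set.image_singleton]
    rw [hG, pow_two (u 1), pow_two (u 2), pow_two (u (m-1)), pow_two (u m),
      humon 1 1, humon 1 2, humon 2 2, humon 1 (m-1), humon 1 m, humon 2 m,
      humon (m-1) (m-1), humon (m-1) m, humon m m]
  have hsub : minGen (Ideal.span G) ⊆ G := by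
    rintro p ⟨⟨s, rfl⟩, hpJ, hmin⟩
    rw [himg, mem_ideal_span_monomial_image] at hpJ
    have hs : s ∈ (monomial s (1 : K)).support := by
      classical
      rw [support_monomial, if_neg one_ne_zero]
      exact Finset.mem_singleton_self s
    obtain ⟨s', hs'T, hle⟩ := hpJ s hs
    have hq : monomial s' (1 : K) ∈ Ideal.span G := by
      rw [himg]
      exact Ideal.subset_span ⟨s', hs'T, rfl⟩
    have hdvd : monomial s' (1 : K) ∣ monomial s 1 :=
      monomial_dvd_monomial.mpr ⟨Or.inr hle, dvd_rfl⟩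
    have heq := hmin (monomial s' 1) ⟨s', rfl⟩ hq hdvd
    rw [← heq, himg]
    exact ⟨s', hs'T, rfl⟩
  have hGfin : G.Finite := by
    rw [hG]
    exact (((((((((Set.finite_singleton _).insert _).insert _).insert _).insert _).insert
      _).insert _).insert _).insert _)
  have hle : ∀ (x : MvPolynomial (Fin 2) K) (s : Set (MvPolynomial (Fin 2) K)) (n : ℕ),
      s.ncard ≤ n → (insert x s).ncard ≤ n + 1 :=
    fun x s n h => le_trans (Set.ncard_insert_le _ _) (Nat.add_le_add_right h 1)
  have hcard : G.ncard ≤ 9 := by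
    rw [hG]
    exact hle _ _ 8 (hle _ _ 7 (hle _ _ 6 (hle _ _ 5 (hle _ _ 4 (hle _ _ 3 (hle _ _ 2
      (hle _ _ 1 (Set.ncard_singleton _).le)))))))
  rw [hIJ]
  exact le_trans (Set.ncard_le_ncard hsub hGfin) hcard
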